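/- Let X be a finite set of points in P^{n_1} × ⋯ × P^{n_k} with Hilbert function H_X. Fix i ∈ {1,...,k} and let t_i = |π_i(X)| be the number of distinct i-th coordinates of points of X. If j = (j_1,...,j_k) ∈ N^k has j_i ≥ t_i - 1, then H_X(j_1,...,j_i,...,j_k) = H_X(j_1,...,t_i - 1,...,j_k). -/

import Mathlib

open MvPolynomial

namespace MultiProjPoints

/-- The variable set of the multigraded coordinate ring of
`ℙ^{n 0} × ⋯ × ℙ^{n (k-1)}`: variables `x_{i,j}` with `i : Fin k`, `0 ≤ j ≤ n i`. -/
abbrev Var (k : ℕ) (n : Fin k → ℕ) := Σ i : Fin k, Fin (n i + 1)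

/-- The `ℕ^k`-grading weight: `deg x_{i,j} = e_i`. -/
def wt (k : ℕ) (n : Fin k → ℕ) : Var k n → (Fin k → ℕ) := fun v => Pi.single v.1 1

/-- The `i`-th standard basis vector of `ℕ^k`. -/
def e {k : ℕ} (l : Fin k) : Fin k → ℕ := Pi.single l 1

variable (K : Type) [Field K]

/-- The graded piece `R_d` of the `ℕ^k`-graded polynomial ring. -/
noncomputable def piece (k : ℕ) (n : Fin k → ℕ) (d : Fin k → ℕ) :
    Submodule K (MvPolynomial (Var k n) K) :=
  weightedHomogeneousSubmodule K (wt k n) d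

/-- `N(d) = ∏ binom (n i + d i) (d i)`, the dimension of `R_d`. -/
def NN (k : ℕ) (n : Fin k → ℕ) (d : Fin k → ℕ) : ℕ := ∏ i, (n i + d i).choose (d i)

/-- A (representative of a) point of `ℙ^{n 0} × ⋯ × ℙ^{n (k-1)}`. -/
def PointRep (k : ℕ) (n : Fin k → ℕ) := (i : Fin k) → Fin (n i + 1) → K

/-- A valid representative: every coordinate block is nonzero. -/
def IsRep {k : ℕ} {n : Fin k → ℕ} (P : PointRep K k n) : Prop := ∀ i, P i ≠ 0

/-- Two representatives define the same point of multi-projective space. -/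
def ProjEq {k : ℕ} {n : Fin k → ℕ} (P Q : PointRep K k n) : Prop :=
  ∀ i, ∃ c : K, c ≠ 0 ∧ P i = c • Q i

/-- A tuple of representatives giving `s` distinct points. -/
def SPoints {k : ℕ} {n : Fin k → ℕ} {s : ℕ} (P : Fin s → PointRep K k n) : Prop :=
  (∀ a, IsRep K (P a)) ∧ ∀ a b, a ≠ b → ¬ ProjEq K (P a) (P b)

/-- The defining ideal `I_X` of the set of points: all polynomials vanishing on
the multi-cone over the points, i.e. the intersection of the point ideals. -/
noncomputable def idealOfPoints {k : ℕ} {n : Fin k → ℕ} {s : ℕ}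
    (P : Fin s → PointRep K k n) : Ideal (MvPolynomial (Var k n) K) :=
  ⨅ (a : Fin s), ⨅ (c : Fin k → K),
    RingHom.ker (eval (fun v : Var k n => c v.1 * P a v.1 v.2))

/-- The degree-`d` piece `I_d` of an ideal, as a `K`-subspace. -/
noncomputable def idealPiece {k : ℕ} {n : Fin k → ℕ}
    (I : Ideal (MvPolynomial (Var k n) K)) (d : Fin k → ℕ) :
    Submodule K (MvPolynomial (Var k n) K) :=
  (Submodule.restrictScalars K I) ⊓ piece K k n d

/-- The multigraded Hilbert function of `X`:
`H_X(d) = dim (R/I_X)_d = dim R_d - dim (I_X)_d`. -/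
noncomputable def hilbert {k : ℕ} {n : Fin k → ℕ} {s : ℕ}
    (P : Fin s → PointRep K k n) (d : Fin k → ℕ) : ℕ :=
  NN k n d - Module.finrank K (idealPiece K (idealOfPoints K P) d)

/-- Generic position: `s` distinct points whose Hilbert function is maximal. -/
def GenericPosition {k : ℕ} {n : Fin k → ℕ} {s : ℕ} (P : Fin s → PointRep K k n) : Prop :=
  SPoints K P ∧ ∀ d : Fin k → ℕ, hilbert K P d = min (NN k n d) s

/-- `R_{e_l}·V`: the span of all products of a variable of degree `e_l`
with an element of `V`. -/
noncomputable def mulSpan {k : ℕ} {n : Fin k → ℕ} (l : Fin k)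
    (V : Submodule K (MvPolynomial (Var k n) K)) :
    Submodule K (MvPolynomial (Var k n) K) :=
  Submodule.span K {g | ∃ (m : Fin (n l + 1)) (f : MvPolynomial (Var k n) K),
    f ∈ V ∧ g = X (⟨l, m⟩ : Var k n) * f}

/-- `D = min { i ∈ ℕ^k | N(i) > s }` (minimal elements for the componentwise order). -/
def Dset (k : ℕ) (n : Fin k → ℕ) (s : ℕ) : Set (Fin k → ℕ) :=
  {i | s < NN k n i ∧ ∀ j : Fin k → ℕ, s < NN k n j → j ≤ i → j = i}

/-- The irrelevant maximal ideal of `R`, generated by all the variables. -/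
noncomputable def irrelevant (k : ℕ) (n : Fin k → ℕ) : Ideal (MvPolynomial (Var k n) K) :=
  Ideal.span (Set.range (X : Var k n → MvPolynomial (Var k n) K))

/-- `X` has exactly `t` distinct `i`-th coordinates (as points of `ℙ^{n i}`). -/
def HasCoordCount (K : Type) [Field K] {k : ℕ} {n : Fin k → ℕ} {s : ℕ}
    (P : Fin s → PointRep K k n) (i : Fin k) (t : ℕ) : Prop :=
  ∃ Q : Fin t → (Fin (n i + 1) → K),
    (∀ b, Q b ≠ 0) ∧
    (∀ b b', b ≠ b' → ¬ ∃ c : K, c ≠ 0 ∧ Q b = c • Q b') ∧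
    (∀ a, ∃ b, ∃ c : K, c ≠ 0 ∧ P a i = c • Q b) ∧
    (∀ b, ∃ a, ∃ c : K, c ≠ 0 ∧ P a i = c • Q b)

section Aux

variable {k : ℕ} {n : Fin k → ℕ}
variable (K : Type) [Field K]



lemma weight_wt_apply (α : Var k n →₀ ℕ) (l : Fin k) :
    Finsupp.weight (wt k n) α l = ∑ μ : Fin (n l + 1), α ⟨l, μ⟩ := by
  classical
  rw [Finsupp.weight_apply]
  rw [Finsupp.sum_fintype _ _ (fun v => by simp)]
  have : (∑ v : Var k n, α v • wt k n v) l = ∑ v : Var k n, α v * (wt k n v l) := by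
    simp [Finset.sum_apply]
  rw [this]
  rw [← Finset.univ_sigma_univ, Finset.sum_sigma]
  rw [Finset.sum_eq_single l]
  · simp [wt, Pi.single_apply]
  · intro l' _ hl'
    simp [wt, Pi.single_apply, hl'.symm]
  · simp

instance sumFintype (m d : ℕ) : Fintype {g : Fin (m+1) → ℕ // ∑ μ, g μ = d} :=
  Fintype.ofFinset (Finset.piAntidiag Finset.univ d) (by
    intro g
    simp only [Finset.mem_piAntidiag]
    exact ⟨fun h => h.1, fun h => ⟨h, fun i _ => Finset.mem_univ i⟩⟩)

lemma card_sum_eq (m d : ℕ) :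
    Fintype.card {g : Fin (m+1) → ℕ // ∑ μ, g μ = d} = (m + d).choose d := by
  classical
  rw [Fintype.card_of_subtype (Finset.piAntidiag Finset.univ d)
    (by intro g; simp only [Finset.mem_piAntidiag]
        exact ⟨fun h => h.1, fun h => ⟨h, fun i _ => Finset.mem_univ i⟩⟩)]
  rw [← Finset.map_sym_eq_piAntidiag, Finset.card_map, Finset.sym_univ, Finset.card_univ]
  rw [Sym.card_sym_eq_choose]
  simp [Nat.add_sub_cancel, Nat.add_comm]

noncomputable def blockEquiv (d : Fin k → ℕ) :
    {α : Var k n →₀ ℕ // Finsupp.weight (wt k n) α = d} ≃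
      Π l, {g : Fin (n l + 1) → ℕ // ∑ μ, g μ = d l} where
  toFun := fun ⟨α, hα⟩ => fun l => ⟨fun μ => α ⟨l, μ⟩, by
    rw [← weight_wt_apply α l, hα]⟩
  invFun := fun G => ⟨Finsupp.equivFunOnFinite.symm (fun v => (G v.1).1 v.2), by
    funext l
    rw [weight_wt_apply]
    simpa using (G l).2⟩
  left_inv := fun ⟨α, hα⟩ => by
    ext v
    simp
  right_inv := fun G => by
    funext l
    ext μ
    simp

noncomputable instance wtFintype (d : Fin k → ℕ) :
    Fintype {α : Var k n →₀ ℕ // Finsupp.weight (wt k n) α = d} :=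
  Fintype.ofEquiv _ (blockEquiv d).symm

lemma card_wt (d : Fin k → ℕ) :
    Fintype.card {α : Var k n →₀ ℕ // Finsupp.weight (wt k n) α = d} = NN k n d := by
  rw [Fintype.card_congr (blockEquiv (n := n) d), Fintype.card_pi]
  simp only [card_sum_eq]
  rfl

lemma piece_eq_span (d : Fin k → ℕ) :
    piece K k n d = Submodule.span K
      ((fun α : Var k n →₀ ℕ => monomial α (1 : K)) ''
        {α | Finsupp.weight (wt k n) α = d}) := by
  apply le_antisymm
  · intro p hp
    rw [← support_sum_monomial_coeff p]
    apply Submodule.sum_mem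
    intro α hα
    have hw : Finsupp.weight (wt k n) α = d := hp (mem_support_iff.mp hα)
    have : monomial α (coeff α p) = (coeff α p) • monomial α (1 : K) := by
      rw [smul_monomial, smul_eq_mul, mul_one]
    rw [this]
    exact Submodule.smul_mem _ _ (Submodule.subset_span ⟨α, hw, rfl⟩)
  · rw [Submodule.span_le]
    rintro _ ⟨α, hα, rfl⟩
    exact isWeightedHomogeneous_monomial _ _ _ hα

lemma li_monomials (d : Fin k → ℕ) :
    LinearIndependent K (fun a : {α : Var k n →₀ ℕ // Finsupp.weight (wt k n) α = d} =>
      monomial a.1 (1 : K)) := by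
  have := (basisMonomials (Var k n) K).linearIndependent
  rw [coe_basisMonomials] at this
  exact this.comp Subtype.val Subtype.val_injective

lemma finrank_piece (d : Fin k → ℕ) :
    Module.finrank K (piece K k n d) = NN k n d := by
  have himg : (fun α : Var k n →₀ ℕ => monomial α (1 : K)) ''
      {α | Finsupp.weight (wt k n) α = d} =
      Set.range (fun a : {α : Var k n →₀ ℕ // Finsupp.weight (wt k n) α = d} =>
        monomial a.1 (1 : K)) := by
    ext p
    constructor
    · rintro ⟨α, hα, rfl⟩; exact ⟨⟨α, hα⟩, rfl⟩
    · rintro ⟨⟨α, hα⟩, rfl⟩; exact ⟨α, hα, rfl⟩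
  rw [piece_eq_span, himg, finrank_span_eq_card (li_monomials K d), card_wt]

instance piece_fd (d : Fin k → ℕ) : FiniteDimensional K (piece K k n d) := by
  rw [piece_eq_span]
  apply FiniteDimensional.span_of_finite
  apply Set.Finite.image
  have : {α : Var k n →₀ ℕ | Finsupp.weight (wt k n) α = d} =
      Set.range (fun a : {α : Var k n →₀ ℕ // Finsupp.weight (wt k n) α = d} => a.1) := by
    rw [Subtype.range_coe_subtype]
  rw [this]
  exact Set.finite_range _


noncomputable def evalMap {s : ℕ} (P : Fin s → PointRep K k n) :
    MvPolynomial (Var k n) K →ₗ[K] (Fin s → K) :=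
  LinearMap.pi (fun a => (MvPolynomial.aeval (fun v : Var k n => P a v.1 v.2)).toLinearMap)

lemma evalMap_apply {s : ℕ} (P : Fin s → PointRep K k n) (f : MvPolynomial (Var k n) K)
    (a : Fin s) :
    evalMap K P f a = eval (fun v : Var k n => P a v.1 v.2) f := by
  have h : evalMap K P f a = aeval (fun v : Var k n => P a v.1 v.2) f := rfl
  rw [h, aeval_eq_eval₂Hom]
  have h2 : algebraMap K K = RingHom.id K := rfl
  rw [h2]
  rfl

lemma eval_scale {d : Fin k → ℕ} {f : MvPolynomial (Var k n) K}
    (hf : f ∈ piece K k n d) (c : Fin k → K) (x : Var k n → K) :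
    eval (fun v : Var k n => c v.1 * x v) f = (∏ l, c l ^ d l) * eval x f := by
  rw [eval_eq', eval_eq', Finset.mul_sum]
  apply Finset.sum_congr rfl
  intro α hα
  have hw : Finsupp.weight (wt k n) α = d := hf (mem_support_iff.mp hα)
  have h1 : (∏ v : Var k n, (c v.1 * x v) ^ α v)
      = (∏ l, c l ^ d l) * ∏ v : Var k n, x v ^ α v := by
    have h2 : (∏ v : Var k n, (c v.1 * x v) ^ α v)
        = (∏ v : Var k n, c v.1 ^ α v) * ∏ v : Var k n, x v ^ α v := by
      rw [← Finset.prod_mul_distrib]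
      exact Finset.prod_congr rfl (fun v _ => mul_pow _ _ _)
    rw [h2]
    congr 1
    rw [← Finset.univ_sigma_univ, Finset.prod_sigma]
    apply Finset.prod_congr rfl
    intro l _
    show (∏ μ : Fin (n l + 1), c l ^ α ⟨l, μ⟩) = c l ^ d l
    rw [Finset.prod_pow_eq_pow_sum, ← weight_wt_apply α l, hw]
  rw [h1]
  ring

lemma mem_idealOfPoints_iff {s : ℕ} (P : Fin s → PointRep K k n) {d : Fin k → ℕ}
    {f : MvPolynomial (Var k n) K} (hf : f ∈ piece K k n d) :
    f ∈ idealOfPoints K P ↔ ∀ a, eval (fun v : Var k n => P a v.1 v.2) f = 0 := by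
  simp only [idealOfPoints, Ideal.mem_iInf, RingHom.mem_ker]
  constructor
  · intro h a
    have := h a (fun _ => 1)
    simpa using this
  · intro h a c
    rw [eval_scale K hf c (fun v : Var k n => P a v.1 v.2), h a, mul_zero]

lemma idealPiece_eq {s : ℕ} (P : Fin s → PointRep K k n) (d : Fin k → ℕ) :
    idealPiece K (idealOfPoints K P) d
      = LinearMap.ker (evalMap K P) ⊓ piece K k n d := by
  ext f
  simp only [idealPiece, Submodule.mem_inf, Submodule.restrictScalars_mem, LinearMap.mem_ker]
  constructor
  · rintro ⟨h1, h2⟩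
    refine ⟨?_, h2⟩
    funext a
    rw [evalMap_apply]
    exact (mem_idealOfPoints_iff K P h2).mp h1 a
  · rintro ⟨h1, h2⟩
    refine ⟨?_, h2⟩
    rw [mem_idealOfPoints_iff K P h2]
    intro a
    rw [← evalMap_apply K P f a, h1, Pi.zero_apply]

lemma hilbert_eq_rank {s : ℕ} (P : Fin s → PointRep K k n) (d : Fin k → ℕ) :
    hilbert K P d = Module.finrank K (Submodule.map (evalMap K P) (piece K k n d)) := by
  classical
  have hcomp := LinearMap.finrank_range_add_finrank_ker
    ((evalMap K P).comp (piece K k n d).subtype)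
  have hker : Module.finrank K (LinearMap.ker ((evalMap K P).comp (piece K k n d).subtype))
      = Module.finrank K (idealPiece K (idealOfPoints K P) d) := by
    rw [LinearMap.ker_comp, idealPiece_eq,
      LinearEquiv.finrank_eq (Submodule.equivMapOfInjective _ (Submodule.injective_subtype _) _),
      Submodule.map_comap_subtype, inf_comm]
  have hrange : LinearMap.range ((evalMap K P).comp (piece K k n d).subtype)
      = Submodule.map (evalMap K P) (piece K k n d) := by
    rw [LinearMap.range_comp, Submodule.range_subtype]
  rw [hker, hrange, finrank_piece K d] at hcomp
  unfold hilbert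
  omega

noncomputable def mEval {s : ℕ} (P : Fin s → PointRep K k n) (α : Var k n →₀ ℕ) :
    Fin s → K :=
  fun a => ∏ v : Var k n, P a v.1 v.2 ^ α v

lemma evalMap_monomial {s : ℕ} (P : Fin s → PointRep K k n) (α : Var k n →₀ ℕ) :
    evalMap K P (monomial α (1 : K)) = mEval K P α := by
  funext a
  rw [evalMap_apply, eval_monomial, one_mul,
    Finsupp.prod_fintype _ _ (fun v => pow_zero _)]
  rfl

lemma map_piece {s : ℕ} (P : Fin s → PointRep K k n) (d : Fin k → ℕ) :
    Submodule.map (evalMap K P) (piece K k n d)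
      = Submodule.span K (mEval K P '' {α | Finsupp.weight (wt k n) α = d}) := by
  rw [piece_eq_span, Submodule.map_span, ← Set.image_comp]
  apply congrArg
  apply Set.image_congr
  intro α _
  exact evalMap_monomial K P α

section OneFactor

variable {t m' : ℕ}

/-- Multiplication by a fixed vector, as a linear map on `ι → K`. -/
noncomputable def diagMul {ι : Type} [Fintype ι] (w : ι → K) : (ι → K) →ₗ[K] (ι → K) :=
  LinearMap.pi (fun b => w b • LinearMap.proj b)

lemma diagMul_apply {ι : Type} [Fintype ι] (w : ι → K) (v : ι → K) (b : ι) :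
    diagMul K w v b = w b * v b := rfl

/-- Evaluation of the monomial with exponents `g` at the points `Q`. -/
noncomputable def uvec (Q : Fin t → (Fin (m' + 1) → K)) (g : Fin (m' + 1) → ℕ) :
    Fin t → K :=
  fun b => ∏ μ, Q b μ ^ g μ

/-- Span of evaluations of all monomials of degree `m`. -/
noncomputable def Sm (Q : Fin t → (Fin (m' + 1) → K)) (m : ℕ) : Submodule K (Fin t → K) :=
  Submodule.span K (uvec K Q '' {g | ∑ μ, g μ = m})

lemma sum_single_mul (x : Fin (m' + 1) → K) (μ : Fin (m' + 1)) :
    ∑ ν, (Pi.single μ (1 : K) : Fin (m' + 1) → K) ν * x ν = x μ := by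
  rw [Finset.sum_eq_single μ]
  · simp
  · intro ν _ hν
    simp [Pi.single_apply, hν]
  · simp

lemma one_mem_Sm (Q : Fin t → (Fin (m' + 1) → K)) : (fun _ => (1 : K)) ∈ Sm K Q 0 := by
  apply Submodule.subset_span
  refine ⟨0, by simp, ?_⟩
  funext b
  simp [uvec]

lemma mul_form_mem {Q : Fin t → (Fin (m' + 1) → K)} {m : ℕ} (L : Fin (m' + 1) → K)
    {v : Fin t → K} (hv : v ∈ Sm K Q m) :
    (fun b => (∑ μ, L μ * Q b μ) * v b) ∈ Sm K Q (m + 1) := by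
  have key : Sm K Q m ≤ Submodule.comap (diagMul K (fun b => ∑ μ, L μ * Q b μ))
      (Sm K Q (m + 1)) := by
    rw [Sm, Submodule.span_le]
    rintro _ ⟨g, hg, rfl⟩
    rw [SetLike.mem_coe, Submodule.mem_comap]
    have hexp : diagMul K (fun b => ∑ μ, L μ * Q b μ) (uvec K Q g)
        = ∑ μ, L μ • uvec K Q (g + Pi.single μ 1) := by
      funext b
      rw [Finset.sum_apply]
      rw [diagMul_apply, Finset.sum_mul]
      apply Finset.sum_congr rfl
      intro μ _
      have : uvec K Q (g + Pi.single μ 1) b = Q b μ * uvec K Q g b := by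
        show (∏ ν, Q b ν ^ (g ν + (Pi.single μ 1 : Fin (m' + 1) → ℕ) ν)) = _
        rw [show (∏ ν, Q b ν ^ (g ν + (Pi.single μ 1 : Fin (m' + 1) → ℕ) ν))
            = (∏ ν, Q b ν ^ (Pi.single μ 1 : Fin (m' + 1) → ℕ) ν) * ∏ ν, Q b ν ^ g ν by
          rw [← Finset.prod_mul_distrib]
          exact Finset.prod_congr rfl (fun ν _ => by rw [pow_add, mul_comm])]
        congr 1
        rw [Finset.prod_eq_single μ]
        · simp
        · intro ν _ hν
          simp [Pi.single_apply, hν]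
        · simp
      rw [Pi.smul_apply, this, smul_eq_mul]
      ring
    rw [hexp]
    apply Submodule.sum_mem
    intro μ _
    apply Submodule.smul_mem
    apply Submodule.subset_span
    refine ⟨g + Pi.single μ 1, ?_, rfl⟩
    have : (∑ ν, (g ν + (Pi.single μ 1 : Fin (m' + 1) → ℕ) ν)) = (∑ ν, g ν) + ∑ ν, (Pi.single μ 1 : Fin (m' + 1) → ℕ) ν := by
      rw [Finset.sum_add_distrib]
    simp only [Set.mem_setOf_eq] at hg ⊢
    show (∑ ν, (g ν + (Pi.single μ 1 : Fin (m' + 1) → ℕ) ν)) = m + 1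
    rw [this, hg]
    congr 1
    rw [Finset.sum_eq_single μ]
    · simp
    · intro ν _ hν
      simp [Pi.single_apply, hν]
    · simp
  exact key hv

lemma coord_mul_mem {Q : Fin t → (Fin (m' + 1) → K)} {m : ℕ} (μ0 : Fin (m' + 1))
    {v : Fin t → K} (hv : v ∈ Sm K Q m) :
    (fun b => Q b μ0 * v b) ∈ Sm K Q (m + 1) := by
  have := mul_form_mem K (Q := Q) (Pi.single μ0 1) hv
  have h2 : (fun b => (∑ μ, (Pi.single μ0 (1 : K) : Fin (m' + 1) → K) μ * Q b μ) * v b)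
      = fun b => Q b μ0 * v b := by
    funext b
    rw [sum_single_mul]
  rwa [h2] at this

lemma pow_mul_mem {Q : Fin t → (Fin (m' + 1) → K)} {m : ℕ} (μ0 : Fin (m' + 1)) (r : ℕ)
    {v : Fin t → K} (hv : v ∈ Sm K Q m) :
    (fun b => Q b μ0 ^ r * v b) ∈ Sm K Q (m + r) := by
  induction r with
  | zero => simpa using hv
  | succ r ih =>
    have := coord_mul_mem K μ0 ih
    have h2 : (fun b => Q b μ0 * (Q b μ0 ^ r * v b)) = fun b => Q b μ0 ^ (r + 1) * v b := by
      funext b; ring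
    rw [h2] at this
    have h3 : m + r + 1 = m + (r + 1) := by omega
    rwa [h3] at this

lemma prod_form_mem {Q : Fin t → (Fin (m' + 1) → K)} (F : Finset (Fin t))
    (L : Fin t → (Fin (m' + 1) → K)) :
    (fun b => ∏ b' ∈ F, (∑ μ, L b' μ * Q b μ)) ∈ Sm K Q F.card := by
  classical
  induction F using Finset.induction_on with
  | empty => simpa using one_mem_Sm K Q
  | insert a F ha ih =>
    have := mul_form_mem K (Q := Q) (L a) ih
    have h2 : (fun b => (∑ μ, L a μ * Q b μ) * ∏ b' ∈ F, (∑ μ, L b' μ * Q b μ))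
        = fun b => ∏ b' ∈ insert a F, (∑ μ, L b' μ * Q b μ) := by
      funext b
      rw [Finset.prod_insert ha]
    rw [h2] at this
    rwa [Finset.card_insert_of_notMem ha]

lemma exists_sep (Q : Fin t → (Fin (m' + 1) → K)) (hQ0 : ∀ b, Q b ≠ 0)
    (hQd : ∀ b b', b ≠ b' → ¬∃ c : K, c ≠ 0 ∧ Q b = c • Q b') (b b' : Fin t)
    (hbb : b ≠ b') :
    ∃ L : Fin (m' + 1) → K, (∑ μ, L μ * Q b' μ) = 0 ∧ (∑ μ, L μ * Q b μ) ≠ 0 := by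
  classical
  by_contra hcon
  push_neg at hcon
  obtain ⟨μ0, hμ0⟩ : ∃ μ0, Q b' μ0 ≠ 0 := by
    by_contra h
    push_neg at h
    exact hQ0 b' (funext h)
  have key : ∀ μ, Q b' μ0 * Q b μ - Q b' μ * Q b μ0 = 0 := by
    intro μ
    set L : Fin (m' + 1) → K :=
      fun ν => Q b' μ0 * (Pi.single μ (1 : K) : Fin (m' + 1) → K) ν - Q b' μ * (Pi.single μ0 (1 : K) : Fin (m' + 1) → K) ν with hL
    have hsum : ∀ x : Fin (m' + 1) → K,
        (∑ ν, L ν * x ν) = Q b' μ0 * x μ - Q b' μ * x μ0 := by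
      intro x
      have : ∀ ν, L ν * x ν
          = Q b' μ0 * ((Pi.single μ (1 : K) : Fin (m' + 1) → K) ν * x ν) - Q b' μ * ((Pi.single μ0 (1 : K) : Fin (m' + 1) → K) ν * x ν) := by
        intro ν; rw [hL]; ring
      rw [Finset.sum_congr rfl (fun ν _ => this ν), Finset.sum_sub_distrib,
        ← Finset.mul_sum, ← Finset.mul_sum, sum_single_mul, sum_single_mul]
    have h0 : (∑ ν, L ν * Q b' ν) = 0 := by rw [hsum]; ring
    have := hcon L h0
    rw [hsum] at this
    exact this
  set c : K := Q b μ0 / Q b' μ0 with hc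
  have hQb : Q b = c • Q b' := by
    funext μ
    have hk : Q b' μ0 * Q b μ = Q b' μ * Q b μ0 := sub_eq_zero.mp (key μ)
    rw [Pi.smul_apply, smul_eq_mul, hc]
    field_simp
    linear_combination hk
  by_cases hc0 : c = 0
  · apply hQ0 b
    rw [hQb, hc0, zero_smul]
  · exact hQd b b' hbb ⟨c, hc0, hQb⟩

lemma Sm_top (Q : Fin t → (Fin (m' + 1) → K)) (hQ0 : ∀ b, Q b ≠ 0)
    (hQd : ∀ b b', b ≠ b' → ¬∃ c : K, c ≠ 0 ∧ Q b = c • Q b') {m : ℕ} (hm : t - 1 ≤ m) :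
    Sm K Q m = ⊤ := by
  classical
  rw [eq_top_iff]
  intro x _
  have hsingle : ∀ b : Fin t, (Pi.single b (1 : K) : Fin t → K) ∈ Sm K Q m := by
    intro b
    have hLex : ∀ b' : Fin t, ∃ L : Fin (m' + 1) → K,
        b' ≠ b → ((∑ μ, L μ * Q b' μ) = 0 ∧ (∑ μ, L μ * Q b μ) ≠ 0) := by
      intro b'
      by_cases h : b' = b
      · exact ⟨0, fun h' => absurd h h'⟩
      · obtain ⟨L, h1, h2⟩ := exists_sep K Q hQ0 hQd b b' (Ne.symm h)
        exact ⟨L, fun _ => ⟨h1, h2⟩⟩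
    choose L hL using hLex
    obtain ⟨μb, hμb⟩ : ∃ μ, Q b μ ≠ 0 := by
      by_contra h; push_neg at h; exact hQ0 b (funext h)
    set w : Fin t → K := fun b'' => Q b'' μb ^ (m - (t - 1)) *
      (∏ b' ∈ Finset.univ.erase b, (∑ μ, L b' μ * Q b'' μ)) with hw
    have hwmem : w ∈ Sm K Q m := by
      have h1 := prod_form_mem K (Q := Q) (Finset.univ.erase b) L
      have h2 := pow_mul_mem K μb (m - (t - 1)) h1
      have hcard : (Finset.univ.erase b).card = t - 1 := by
        rw [Finset.card_erase_of_mem (Finset.mem_univ b), Finset.card_univ, Fintype.card_fin]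
      rw [hcard] at h2
      have h3 : t - 1 + (m - (t - 1)) = m := by omega
      rwa [h3] at h2
    have hwb : w b ≠ 0 := by
      rw [hw]
      apply mul_ne_zero
      · exact pow_ne_zero _ hμb
      · apply Finset.prod_ne_zero_iff.mpr
        intro b' hb'
        exact (hL b' (Finset.ne_of_mem_erase hb')).2
    have hwz : ∀ b'', b'' ≠ b → w b'' = 0 := by
      intro b'' hb''
      rw [hw]
      apply mul_eq_zero_of_right
      apply Finset.prod_eq_zero (Finset.mem_erase.mpr ⟨hb'', Finset.mem_univ _⟩)
      exact (hL b'' hb'').1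
    have hsw : (Pi.single b (1 : K) : Fin t → K) = (w b)⁻¹ • w := by
      funext b''
      by_cases h : b'' = b
      · subst h; rw [Pi.single_eq_same, Pi.smul_apply, smul_eq_mul, inv_mul_cancel₀ hwb]
      · rw [Pi.single_eq_of_ne h, Pi.smul_apply, smul_eq_mul, hwz b'' h, mul_zero]
    rw [hsw]
    exact Submodule.smul_mem _ _ hwmem
  have hx : x = ∑ b, x b • (Pi.single b (1 : K) : Fin t → K) := by
    funext b''
    rw [Finset.sum_apply, Finset.sum_eq_single b'']
    · simp
    · intro b _ hb
      rw [Pi.smul_apply, Pi.single_eq_of_ne (Ne.symm hb), smul_eq_mul, mul_zero]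
    · simp
  rw [hx]
  exact Submodule.sum_mem _ (fun b _ => Submodule.smul_mem _ _ (hsingle b))

end OneFactor

section Assemble

variable {s : ℕ}

/-- Block-`i` part of an exponent vector. -/
def gi (i : Fin k) (α : Var k n →₀ ℕ) : Fin (n i + 1) → ℕ := fun μ => α ⟨i, μ⟩

/-- Evaluation of the off-block-`i` part of the monomial `α` at the points `P`. -/
noncomputable def rv (P : Fin s → PointRep K k n) (i : Fin k) (α : Var k n →₀ ℕ) :
    Fin s → K :=
  fun a => ∏ l ∈ Finset.univ.erase i, ∏ μ, P a l μ ^ α ⟨l, μ⟩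

/-- Replace the block-`i` part of `α` by `g`. -/
noncomputable def combine (i : Fin k) (α : Var k n →₀ ℕ) (g : Fin (n i + 1) → ℕ) :
    Var k n →₀ ℕ :=
  Finsupp.equivFunOnFinite.symm
    (fun v => if h : v.1 = i then g (Fin.cast (by rw [h]) v.2) else α v)

lemma combine_apply_i (i : Fin k) (α : Var k n →₀ ℕ) (g : Fin (n i + 1) → ℕ)
    (μ : Fin (n i + 1)) : combine i α g ⟨i, μ⟩ = g μ := by
  show (Finsupp.equivFunOnFinite.symm _) _ = g μ
  rw [Finsupp.equivFunOnFinite_symm_apply_apply]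
  exact dif_pos rfl

lemma combine_apply_ne (i : Fin k) (α : Var k n →₀ ℕ) (g : Fin (n i + 1) → ℕ)
    {l : Fin k} (μ : Fin (n l + 1)) (hl : l ≠ i) : combine i α g ⟨l, μ⟩ = α ⟨l, μ⟩ := by
  show (Finsupp.equivFunOnFinite.symm _) _ = _
  rw [Finsupp.equivFunOnFinite_symm_apply_apply]
  exact dif_neg hl

lemma weight_combine (i : Fin k) (α : Var k n →₀ ℕ) (g : Fin (n i + 1) → ℕ)
    (d : Fin k → ℕ) (hα : Finsupp.weight (wt k n) α = d) :
    Finsupp.weight (wt k n) (combine i α g) = Function.update d i (∑ μ, g μ) := by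
  funext l
  rw [weight_wt_apply]
  by_cases h : l = i
  · subst h
    rw [Function.update_self]
    exact Finset.sum_congr rfl (fun μ _ => combine_apply_i _ α g μ)
  · rw [Function.update_of_ne h, ← hα, weight_wt_apply]
    exact Finset.sum_congr rfl (fun μ _ => combine_apply_ne i α g μ h)

lemma gi_combine (i : Fin k) (α : Var k n →₀ ℕ) (g : Fin (n i + 1) → ℕ) :
    gi i (combine i α g) = g :=
  funext (fun μ => combine_apply_i i α g μ)

lemma rv_combine (P : Fin s → PointRep K k n) (i : Fin k) (α : Var k n →₀ ℕ)
    (g : Fin (n i + 1) → ℕ) : rv K P i (combine i α g) = rv K P i α := by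
  funext a
  unfold rv
  apply Finset.prod_congr rfl
  intro l hl
  apply Finset.prod_congr rfl
  intro μ _
  rw [combine_apply_ne i α g μ (Finset.ne_of_mem_erase hl)]

lemma mEval_split (P : Fin s → PointRep K k n) (i : Fin k) (α : Var k n →₀ ℕ) (a : Fin s) :
    mEval K P α a = (∏ μ, P a i μ ^ α ⟨i, μ⟩) * rv K P i α a := by
  show (∏ v : Var k n, P a v.1 v.2 ^ α v) = _
  rw [← Finset.univ_sigma_univ, Finset.prod_sigma]
  exact (Finset.mul_prod_erase Finset.univ _ (Finset.mem_univ i)).symm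

variable {P : Fin s → PointRep K k n} {i : Fin k} {t : ℕ}
  {Q : Fin t → (Fin (n i + 1) → K)} {β : Fin s → Fin t} {c : Fin s → K}

lemma mEval_u (hc : ∀ a, P a i = c a • Q (β a)) {α : Var k n →₀ ℕ} {d : Fin k → ℕ}
    (hα : Finsupp.weight (wt k n) α = d) (a : Fin s) :
    mEval K P α a = c a ^ d i * uvec K Q (gi i α) (β a) * rv K P i α a := by
  rw [mEval_split]
  congr 1
  have hPa : ∀ μ, P a i μ = c a * Q (β a) μ := fun μ => by rw [hc a]; rfl
  calc (∏ μ, P a i μ ^ α ⟨i, μ⟩)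
      = ∏ μ, (c a ^ α ⟨i, μ⟩ * Q (β a) μ ^ α ⟨i, μ⟩) := by
        exact Finset.prod_congr rfl (fun μ _ => by rw [hPa μ, mul_pow])
    _ = (∏ μ, c a ^ α ⟨i, μ⟩) * ∏ μ, Q (β a) μ ^ α ⟨i, μ⟩ := Finset.prod_mul_distrib
    _ = c a ^ d i * uvec K Q (gi i α) (β a) := by
        congr 1
        rw [Finset.prod_pow_eq_pow_sum, ← weight_wt_apply α i, hα]

/-- The fixed-rest linear map `y ↦ (a ↦ c a ^ M * rv α a * y (β a))`. -/
noncomputable def phiMap (P : Fin s → PointRep K k n) (i : Fin k) (β : Fin s → Fin t)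
    (c : Fin s → K) (α : Var k n →₀ ℕ) (M : ℕ) : (Fin t → K) →ₗ[K] (Fin s → K) :=
  (diagMul K (fun a => c a ^ M * rv K P i α a)).comp (LinearMap.funLeft K K β)

lemma phiMap_apply (α : Var k n →₀ ℕ) (M : ℕ) (y : Fin t → K) :
    phiMap K P i β c α M y = fun a => c a ^ M * rv K P i α a * y (β a) := rfl

lemma phiMap_mem_span (hc : ∀ a, P a i = c a • Q (β a)) (j : Fin k → ℕ)
    (α : Var k n →₀ ℕ) (r : ℕ) (hα : Finsupp.weight (wt k n) α = Function.update j i r)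
    (M : ℕ) {y : Fin t → K} (hy : y ∈ Sm K Q M) :
    phiMap K P i β c α M y ∈ Submodule.span K
      (mEval K P '' {α' | Finsupp.weight (wt k n) α' = Function.update j i M}) := by
  classical
  have key : Sm K Q M ≤ Submodule.comap (phiMap K P i β c α M)
      (Submodule.span K
        (mEval K P '' {α' | Finsupp.weight (wt k n) α' = Function.update j i M})) := by
    rw [Sm, Submodule.span_le]
    rintro _ ⟨g, hg, rfl⟩
    rw [SetLike.mem_coe, Submodule.mem_comap]
    have hw : Finsupp.weight (wt k n) (combine i α g) = Function.update j i M := by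
      rw [weight_combine i α g _ hα, Function.update_idem]
      rw [Set.mem_setOf_eq] at hg
      rw [hg]
    have heq : phiMap K P i β c α M (uvec K Q g) = mEval K P (combine i α g) := by
      funext a
      rw [mEval_u K hc hw a, Function.update_self, gi_combine, rv_combine]
      show c a ^ M * rv K P i α a * uvec K Q g (β a) = _
      ring
    rw [heq]
    exact Submodule.subset_span ⟨combine i α g, hw, rfl⟩
  exact key hy

end Assemble

section Final

variable {s : ℕ} {P : Fin s → PointRep K k n} {i : Fin k} {t : ℕ}
  {Q : Fin t → (Fin (n i + 1) → K)} {β : Fin s → Fin t} {c : Fin s → K}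

noncomputable def diagEquiv (w : Fin s → K) (hw : ∀ a, w a ≠ 0) :
    (Fin s → K) ≃ₗ[K] (Fin s → K) :=
  LinearEquiv.ofLinear (diagMul K w) (diagMul K (fun a => (w a)⁻¹))
    (by
      apply LinearMap.ext
      intro v
      funext a
      show w a * ((w a)⁻¹ * v a) = v a
      rw [← mul_assoc, mul_inv_cancel₀ (hw a), one_mul])
    (by
      apply LinearMap.ext
      intro v
      funext a
      show (w a)⁻¹ * (w a * v a) = v a
      rw [← mul_assoc, inv_mul_cancel₀ (hw a), one_mul])

lemma span_compare (hQ0 : ∀ b, Q b ≠ 0)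
    (hQd : ∀ b b', b ≠ b' → ¬∃ cc : K, cc ≠ 0 ∧ Q b = cc • Q b')
    (hc : ∀ a, P a i = c a • Q (β a)) (j : Fin k → ℕ) (m1 m2 : ℕ)
    (h1 : t - 1 ≤ m1) (h2 : t - 1 ≤ m2) (hle : m2 ≤ m1) :
    Submodule.span K (mEval K P '' {α | Finsupp.weight (wt k n) α = Function.update j i m1})
      = Submodule.map (diagMul K (fun a => c a ^ (m1 - m2)))
          (Submodule.span K
            (mEval K P '' {α | Finsupp.weight (wt k n) α = Function.update j i m2})) := by
  have hpow : m1 - m2 + m2 = m1 := by omega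
  apply le_antisymm
  · rw [Submodule.span_le]
    rintro _ ⟨α, hα, rfl⟩
    rw [Set.mem_setOf_eq] at hα
    rw [SetLike.mem_coe]
    have hx : uvec K Q (gi i α) ∈ Sm K Q m2 := by
      rw [Sm_top K Q hQ0 hQd h2]; trivial
    have hmem := phiMap_mem_span K hc j α m1 hα m2 hx
    refine Submodule.mem_map.mpr ⟨phiMap K P i β c α m2 (uvec K Q (gi i α)), hmem, ?_⟩
    funext a
    rw [diagMul_apply]
    have hme := mEval_u K hc hα a
    rw [Function.update_self] at hme
    rw [hme]
    show c a ^ (m1 - m2) * (c a ^ m2 * rv K P i α a * uvec K Q (gi i α) (β a)) = _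
    rw [show (c a ^ (m1 - m2) * (c a ^ m2 * rv K P i α a * uvec K Q (gi i α) (β a)))
        = c a ^ (m1 - m2 + m2) * uvec K Q (gi i α) (β a) * rv K P i α a by
      rw [pow_add]; ring]
    rw [hpow]
  · rw [Submodule.map_span, Submodule.span_le]
    rintro _ ⟨_, ⟨α, hα, rfl⟩, rfl⟩
    rw [Set.mem_setOf_eq] at hα
    rw [SetLike.mem_coe]
    have hx : uvec K Q (gi i α) ∈ Sm K Q m1 := by
      rw [Sm_top K Q hQ0 hQd h1]; trivial
    have hmem := phiMap_mem_span K hc j α m2 hα m1 hx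
    have heq : diagMul K (fun a => c a ^ (m1 - m2)) (mEval K P α)
        = phiMap K P i β c α m1 (uvec K Q (gi i α)) := by
      funext a
      rw [diagMul_apply]
      have hme := mEval_u K hc hα a
      rw [Function.update_self] at hme
      rw [hme]
      show _ = c a ^ m1 * rv K P i α a * uvec K Q (gi i α) (β a)
      rw [show (c a ^ (m1 - m2) * (c a ^ m2 * uvec K Q (gi i α) (β a) * rv K P i α a))
          = c a ^ (m1 - m2 + m2) * rv K P i α a * uvec K Q (gi i α) (β a) by
        rw [pow_add]; ring]
      rw [hpow]
    rw [heq]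
    exact hmem

lemma rank_eq (hQ0 : ∀ b, Q b ≠ 0)
    (hQd : ∀ b b', b ≠ b' → ¬∃ cc : K, cc ≠ 0 ∧ Q b = cc • Q b')
    (hc0 : ∀ a, c a ≠ 0) (hc : ∀ a, P a i = c a • Q (β a))
    (j : Fin k → ℕ) (hj : t - 1 ≤ j i) :
    Module.finrank K (Submodule.map (evalMap K P) (piece K k n j))
      = Module.finrank K (Submodule.map (evalMap K P)
          (piece K k n (Function.update j i (t - 1)))) := by
  rw [map_piece, map_piece]
  have hjj : {α : Var k n →₀ ℕ | Finsupp.weight (wt k n) α = j}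
      = {α | Finsupp.weight (wt k n) α = Function.update j i (j i)} := by
    rw [Function.update_eq_self]
  rw [hjj]
  rw [span_compare K hQ0 hQd hc j (j i) (t - 1) hj le_rfl hj]
  have hco : diagMul K (fun a => c a ^ (j i - (t - 1)))
      = (diagEquiv K (fun a => c a ^ (j i - (t - 1)))
          (fun a => pow_ne_zero _ (hc0 a)) : (Fin s → K) →ₗ[K] (Fin s → K)) := rfl
  rw [hco, LinearEquiv.finrank_map_eq]

end Final

end Aux

theorem hilbert_stabilizes (K : Type) [Field K] [IsAlgClosed K] [CharZero K]
    (k : ℕ) (n : Fin k → ℕ) {s : ℕ} (P : Fin s → PointRep K k n) (hP : SPoints K P)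
    (i : Fin k) (t : ℕ) (ht : HasCoordCount K P i t)
    (j : Fin k → ℕ) (hj : t - 1 ≤ j i) :
    hilbert K P j = hilbert K P (Function.update j i (t - 1)) := by
  obtain ⟨Q, hQ0, hQd, h3, _⟩ := ht
  choose β cc hcc0 hccP using h3
  rw [hilbert_eq_rank, hilbert_eq_rank]
  exact rank_eq K hQ0 hQd hcc0 hccP j hj

end MultiProjPoints
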